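/- arXiv:1510.00059 — 5 statements merged into one kernel-verified Lean document; each statement's English description precedes it below -/
import Mathlib

section
/- Let 0 < β₁ < β₂ and let L ≥ 2β₂ − β₁. Let X be uniformly distributed on [−L, L]. Then the conditional variance of X given X ∈ (β₁, 2β₂ − β₁] is strictly smaller than the conditional variance of X given X ∈ [−β₂, −β₁) ∪ (β₁, β₂]; explicitly, Var(X | X ∈ (β₁, 2β₂ − β₁]) = (β₂ − β₁)²/3 < (β₁² + β₁β₂ + β₂²)/3 = Var(X | X ∈ [−β₂, −β₁) ∪ (β₁, β₂]). -/
open MeasureTheory ProbabilityTheory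

-- helper: conditional of scaled restricted Lebesgue is uniform on T
lemma cond_eq_uniform (L : ℝ) (hL : 0 < L) (T : Set ℝ) (hT : MeasurableSet T)
    (hsub : T ⊆ Set.Icc (-L) L) :
    ((ENNReal.ofReal (2*L))⁻¹ • volume.restrict (Set.Icc (-L) L))[|T]
      = (volume T)⁻¹ • volume.restrict T := by
  have hc0 : (ENNReal.ofReal (2*L)) ≠ 0 := by
    simp [ENNReal.ofReal_eq_zero]; linarith
  have hct : (ENNReal.ofReal (2*L)) ≠ ⊤ := ENNReal.ofReal_ne_top
  have hres : (volume.restrict (Set.Icc (-L) L)).restrict T = volume.restrict T := by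
    rw [Measure.restrict_restrict hT, Set.inter_eq_left.mpr hsub]
  have happ : ((ENNReal.ofReal (2*L))⁻¹ • volume.restrict (Set.Icc (-L) L)) T
      = (ENNReal.ofReal (2*L))⁻¹ * volume T := by
    rw [Measure.smul_apply, smul_eq_mul, Measure.restrict_apply hT,
      Set.inter_eq_left.mpr hsub]
  have hTfin : volume T ≠ ⊤ :=
    ne_top_of_le_ne_top (by rw [Real.volume_Icc]; exact ENNReal.ofReal_ne_top)
      (measure_mono hsub)
  rw [ProbabilityTheory.cond, Measure.restrict_smul, hres, happ, smul_smul,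
    ENNReal.mul_inv (Or.inr hTfin) (Or.inl (ENNReal.inv_ne_top.mpr hc0)),
    inv_inv, mul_right_comm, ENNReal.mul_inv_cancel hc0 hct, one_mul]

-- variance of uniform measure on bounded T
lemma variance_uniform (T : Set ℝ) (hT : MeasurableSet T) (B : ℝ)
    (hB : ∀ x ∈ T, |x| ≤ B) (h0 : volume T ≠ 0) (hfin : volume T ≠ ⊤) :
    variance id ((volume T)⁻¹ • volume.restrict T)
      = (∫ x in T, x^2) / (volume T).toReal - ((∫ x in T, x) / (volume T).toReal)^2 := by
  set ν : Measure ℝ := (volume T)⁻¹ • volume.restrict T with hν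
  haveI hprob : IsProbabilityMeasure ν := by
    constructor
    rw [hν, Measure.smul_apply, smul_eq_mul, Measure.restrict_apply MeasurableSet.univ,
      Set.univ_inter, ENNReal.inv_mul_cancel h0 hfin]
  have hmem : MemLp id 2 ν := by
    refine (memLp_top_of_bound aestronglyMeasurable_id B ?_).mono_exponent le_top
    rw [hν]
    refine (Measure.ae_smul_measure ?_ _)
    filter_upwards [ae_restrict_mem hT] with x hx
    simpa using hB x hx
  rw [variance_eq_sub hmem]
  have htr : ((volume T)⁻¹).toReal = ((volume T).toReal)⁻¹ := by
    simp [ENNReal.toReal_inv]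
  have h1 : ν[id] = (∫ x in T, x) / (volume T).toReal := by
    rw [hν, integral_smul_measure, htr, smul_eq_mul, div_eq_inv_mul]
    rfl
  have h2 : ν[id^2] = (∫ x in T, x^2) / (volume T).toReal := by
    rw [hν, integral_smul_measure, htr, smul_eq_mul, div_eq_inv_mul]
    rfl
  rw [h1, h2]

theorem stmt_4 (L β₁ β₂ : ℝ) (h1 : 0 < β₁) (h2 : β₁ < β₂) (hL : 2*β₂ - β₁ ≤ L) :
    variance id
        (((ENNReal.ofReal (2*L))⁻¹ • volume.restrict (Set.Icc (-L) L))[|Set.Ioc β₁ (2*β₂ - β₁)])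
      = (β₂ - β₁)^2 / 3 ∧
    variance id
        (((ENNReal.ofReal (2*L))⁻¹ • volume.restrict (Set.Icc (-L) L))[|Set.Ico (-β₂) (-β₁) ∪ Set.Ioc β₁ β₂])
      = (β₁^2 + β₁*β₂ + β₂^2) / 3 ∧
    (β₂ - β₁)^2 / 3 < (β₁^2 + β₁*β₂ + β₂^2) / 3 := by
  have hLpos : 0 < L := by linarith
  refine ⟨?_, ?_, ?_⟩
  · set T := Set.Ioc β₁ (2*β₂ - β₁) with hTdef
    have hT : MeasurableSet T := measurableSet_Ioc
    have hsub : T ⊆ Set.Icc (-L) L := by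
      intro x hx
      constructor <;> [nlinarith [hx.1, hx.2]; nlinarith [hx.1, hx.2]]
    have hvol : volume T = ENNReal.ofReal (2*(β₂ - β₁)) := by
      rw [hTdef, Real.volume_Ioc]; ring_nf
    have h0 : volume T ≠ 0 := by
      rw [hvol]; simp [ENNReal.ofReal_eq_zero]; linarith
    rw [cond_eq_uniform L hLpos T hT hsub,
      variance_uniform T hT L (fun x hx => by
        rcases hsub hx with ⟨ha, hb⟩; rw [abs_le]; exact ⟨ha, hb⟩) h0 (by rw [hvol]; exact ENNReal.ofReal_ne_top)]
    have hvr : (volume T).toReal = 2*(β₂-β₁) := by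
      rw [hvol, ENNReal.toReal_ofReal (by linarith)]
    have hi1 : (∫ x in T, x) = ((2*β₂-β₁)^2 - β₁^2)/2 := by
      rw [hTdef, ← intervalIntegral.integral_of_le (by linarith), integral_id]
    have hi2 : (∫ x in T, x^2) = ((2*β₂-β₁)^3 - β₁^3)/3 := by
      rw [hTdef, ← intervalIntegral.integral_of_le (by linarith)]
      rw [integral_pow]
      norm_num
    have hne : (0:ℝ) < β₂ - β₁ := by linarith
    rw [hi1, hi2, hvr]
    field_simp
    ring
  · set T := Set.Ico (-β₂) (-β₁) ∪ Set.Ioc β₁ β₂ with hTdef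
    have hT : MeasurableSet T := measurableSet_Ico.union measurableSet_Ioc
    have hsub : T ⊆ Set.Icc (-L) L := by
      intro x hx
      rcases hx with hx | hx
      · exact ⟨by nlinarith [hx.1, hx.2], by nlinarith [hx.1, hx.2]⟩
      · exact ⟨by nlinarith [hx.1, hx.2], by nlinarith [hx.1, hx.2]⟩
    have hvol : volume T = ENNReal.ofReal (2*(β₂ - β₁)) := by
      rw [hTdef, measure_union (by
        apply Set.disjoint_left.mpr
        intro x hx hx'
        have := hx.2; have := hx'.1; linarith) measurableSet_Ioc,
        Real.volume_Ico, Real.volume_Ioc, ← ENNReal.ofReal_add (by linarith) (by linarith)]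
      ring_nf
    have h0 : volume T ≠ 0 := by
      rw [hvol]; simp [ENNReal.ofReal_eq_zero]; linarith
    have hdisj : Disjoint (Set.Ico (-β₂) (-β₁)) (Set.Ioc β₁ β₂) := by
      apply Set.disjoint_left.mpr
      intro x hx hx'
      have := hx.2; have := hx'.1; linarith
    rw [cond_eq_uniform L hLpos T hT hsub,
      variance_uniform T hT L (fun x hx => by
        rcases hsub hx with ⟨ha, hb⟩; rw [abs_le]; exact ⟨ha, hb⟩) h0 (by rw [hvol]; exact ENNReal.ofReal_ne_top)]
    have hvr : (volume T).toReal = 2*(β₂-β₁) := by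
      rw [hvol, ENNReal.toReal_ofReal (by linarith)]
    have hIcoIoc : ∀ f : ℝ → ℝ, (∫ x in Set.Ico (-β₂) (-β₁), f x) = ∫ x in Set.Ioc (-β₂) (-β₁), f x := by
      intro f
      exact setIntegral_congr_set Ico_ae_eq_Ioc
    have hint1 : IntegrableOn (fun x : ℝ => x) (Set.Ico (-β₂) (-β₁)) volume :=
      ((continuous_id.continuousOn).integrableOn_compact isCompact_Icc).mono_set
        Set.Ico_subset_Icc_self
    have hint2 : IntegrableOn (fun x : ℝ => x) (Set.Ioc β₁ β₂) volume :=
      ((continuous_id.continuousOn).integrableOn_compact isCompact_Icc).mono_set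
        Set.Ioc_subset_Icc_self
    have hcont2 : Continuous (fun x : ℝ => x^2) := by continuity
    have hint1' : IntegrableOn (fun x : ℝ => x^2) (Set.Ico (-β₂) (-β₁)) volume :=
      ((hcont2.continuousOn).integrableOn_compact isCompact_Icc).mono_set
        Set.Ico_subset_Icc_self
    have hint2' : IntegrableOn (fun x : ℝ => x^2) (Set.Ioc β₁ β₂) volume :=
      ((hcont2.continuousOn).integrableOn_compact isCompact_Icc).mono_set
        Set.Ioc_subset_Icc_self
    have hi1 : (∫ x in T, x) = 0 := by
      rw [hTdef, setIntegral_union hdisj measurableSet_Ioc hint1 hint2,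
        hIcoIoc (fun x => x), ← intervalIntegral.integral_of_le (by linarith),
        ← intervalIntegral.integral_of_le (le_of_lt h2), integral_id, integral_id]
      ring
    have hi2 : (∫ x in T, x^2) = 2*(β₂^3 - β₁^3)/3 := by
      rw [hTdef, setIntegral_union hdisj measurableSet_Ioc hint1' hint2',
        hIcoIoc (fun x => x^2), ← intervalIntegral.integral_of_le (by linarith),
        ← intervalIntegral.integral_of_le (le_of_lt h2)]
      rw [integral_pow, integral_pow]
      norm_num
      ring
    have hne : (0:ℝ) < β₂ - β₁ := by linarith
    rw [hi1, hi2, hvr]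
    field_simp
    ring
  · have h3 : (β₂ - β₁)^2 < β₁^2 + β₁*β₂ + β₂^2 := by nlinarith [mul_pos h1 (h1.trans h2)]
    linarith
end

section
/- Let p : ℝ → [0, ∞) be a probability density function that is symmetric and unimodal around zero, i.e., p(x) = p(−x) for all x and p(a) ≥ p(b) whenever |a| ≤ |b|. Let 0 ≤ a ≤ c, a < b, c < d be real numbers such that ∫ₐᵇ p(x) dx = ∫꜀ᵈ p(x) dx > 0. Then the conditional variance of a random variable X with density p over (a, b] is at most its conditional variance over (c, d]: (∫ₐᵇ x² p dx)/Q − ((∫ₐᵇ x p dx)/Q)² ≤ (∫꜀ᵈ x² p dx)/Q − ((∫꜀ᵈ x p dx)/Q)², where Q = ∫ₐᵇ p(x) dx. -/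
open MeasureTheory intervalIntegral Set
open scoped ENNReal NNReal

noncomputable def FF (p : ℝ → ℝ) (α β : ℝ) : ℝ → ℝ :=
  fun t => ∫ x in α..(max α (min t β)), p x

noncomputable def qq (p : ℝ → ℝ) (α β : ℝ) : ℝ → ℝ :=
  fun u => sInf (insert β {t | t ∈ Set.Icc α β ∧ u ≤ FF p α β t})

section aux
variable {p : ℝ → ℝ} (hint : Integrable p) (hpos : ∀ x, 0 ≤ p x) {α β : ℝ} (hαβ : α ≤ β)
include hint hpos hαβ
set_option linter.unusedSectionVars false

lemma FF_mono : Monotone (FF p α β) := by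
  intro s t hst
  have h1 : α ≤ max α (min s β) := le_max_left _ _
  have h2 : max α (min s β) ≤ max α (min t β) :=
    max_le_max le_rfl (min_le_min hst le_rfl)
  simp only [FF]
  rw [ intervalIntegral.integral_of_le h1, intervalIntegral.integral_of_le (h1.trans h2)]
  apply setIntegral_mono_set hint.integrableOn
  · exact Filter.Eventually.of_forall fun x => hpos x
  · exact HasSubset.Subset.eventuallyLE (Set.Ioc_subset_Ioc le_rfl h2)

lemma FF_cont : Continuous (FF p α β) := by
  have : Continuous (fun t => max α (min t β)) :=
    continuous_const.max ((continuous_id.min continuous_const))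
  exact (intervalIntegral.continuous_primitive (fun _ _ => hint.intervalIntegrable) α).comp this

lemma FF_nonneg (t : ℝ) : 0 ≤ FF p α β t := by
  apply intervalIntegral.integral_nonneg (le_max_left _ _) (fun x _ => hpos x)

lemma FF_le (t : ℝ) : FF p α β t ≤ ∫ x in α..β, p x := by
  have h1 : α ≤ max α (min t β) := le_max_left _ _
  have h2 : max α (min t β) ≤ β := max_le hαβ (min_le_right _ _)
  simp only [FF]
  rw [ intervalIntegral.integral_of_le h1, intervalIntegral.integral_of_le hαβ]
  apply setIntegral_mono_set hint.integrableOn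
  · exact Filter.Eventually.of_forall fun x => hpos x
  · exact HasSubset.Subset.eventuallyLE (Set.Ioc_subset_Ioc le_rfl h2)

lemma FF_of_le {t : ℝ} (h : t ≤ α) : FF p α β t = 0 := by
  rw [FF]
  have : max α (min t β) = α := max_eq_left ((min_le_left _ _).trans h)
  rw [this, intervalIntegral.integral_same]

lemma FF_of_ge {t : ℝ} (h : β ≤ t) : FF p α β t = ∫ x in α..β, p x := by
  rw [FF]
  have : max α (min t β) = β := by rw [min_eq_right h, max_eq_right hαβ]
  rw [this]

lemma FF_of_mem {t : ℝ} (h1 : α ≤ t) (h2 : t ≤ β) : FF p α β t = ∫ x in α..t, p x := by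
  simp only [FF]
  rw [ min_eq_left h2, max_eq_right h1]

lemma FF_diff {s t : ℝ} (h1 : α ≤ s) (h2 : s ≤ t) (h3 : t ≤ β) :
    FF p α β t - FF p α β s = ∫ x in s..t, p x := by
  rw [FF_of_mem hint hpos hαβ h1 (h2.trans h3), FF_of_mem hint hpos hαβ (h1.trans h2) h3,
    intervalIntegral.integral_interval_sub_left hint.intervalIntegrable hint.intervalIntegrable]

lemma qq_mem_Icc (u : ℝ) : qq p α β u ∈ Set.Icc α β := by
  have hsub : insert β {t | t ∈ Set.Icc α β ∧ u ≤ FF p α β t} ⊆ Set.Icc α β := by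
    intro t ht
    rcases ht with h | h
    · rw [h]; exact ⟨hαβ, le_rfl⟩
    · exact h.1
  have hne : (insert β {t | t ∈ Set.Icc α β ∧ u ≤ FF p α β t}).Nonempty :=
    ⟨β, Set.mem_insert _ _⟩
  have hbdd : BddBelow (insert β {t | t ∈ Set.Icc α β ∧ u ≤ FF p α β t}) :=
    ⟨α, fun t ht => (hsub ht).1⟩
  constructor
  · exact le_csInf hne (fun t ht => (hsub ht).1)
  · exact (csInf_le hbdd (Set.mem_insert _ _)).trans le_rfl

lemma qq_mono : Monotone (qq p α β) := by
  intro u v huv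
  apply csInf_le_csInf
  · exact ⟨α, fun t ht => by
      rcases ht with h | h
      · rw [h]; exact hαβ
      · exact h.1.1⟩
  · exact ⟨β, Set.mem_insert _ _⟩
  · intro t ht
    rcases ht with h | h
    · rw [h]; exact Set.mem_insert _ _
    · exact Set.mem_insert_iff.2 (Or.inr ⟨h.1, huv.trans h.2⟩)

lemma FF_qq {u : ℝ} (hu0 : 0 < u) (huQ : u ≤ ∫ x in α..β, p x) :
    FF p α β (qq p α β u) = u := by
  set S : Set ℝ := {t | t ∈ Set.Icc α β ∧ u ≤ FF p α β t} with hS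
  have hβS : β ∈ S := ⟨⟨hαβ, le_rfl⟩, by rw [FF_of_ge hint hpos hαβ le_rfl]; exact huQ⟩
  have hins : insert β S = S := Set.insert_eq_self.2 hβS
  have hq : qq p α β u = sInf S := by rw [qq]; rw [hins]
  have hclosed : IsClosed S := by
    have : S = Set.Icc α β ∩ FF p α β ⁻¹' Set.Ici u := by
      ext t; simp [hS, Set.mem_inter_iff, and_comm]
    rw [this]
    exact isClosed_Icc.inter (isClosed_Ici.preimage (FF_cont hint hpos hαβ))
  have hne : S.Nonempty := ⟨β, hβS⟩
  have hbdd : BddBelow S := ⟨α, fun t ht => ht.1.1⟩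
  have hmem : sInf S ∈ S := hclosed.csInf_mem hne hbdd
  have hqmem : qq p α β u ∈ S := hq ▸ hmem
  -- use IVT to find t with FF t = u in [α, qq u]
  have h0 : FF p α β α = 0 := FF_of_le hint hpos hαβ le_rfl
  have hicc : u ∈ Set.Icc (FF p α β α) (FF p α β (qq p α β u)) :=
    ⟨h0 ▸ hu0.le, hqmem.2⟩
  obtain ⟨t, ht1, ht2⟩ := intermediate_value_Icc hqmem.1.1 (FF_cont hint hpos hαβ).continuousOn hicc
  have htS : t ∈ S := ⟨⟨ht1.1, ht1.2.trans hqmem.1.2⟩, ht2.ge⟩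
  have : qq p α β u ≤ t := hq ▸ csInf_le hbdd htS
  have htq : t = qq p α β u := le_antisymm ht1.2 this
  rw [← htq]; exact ht2

lemma qq_le_iff {u t : ℝ} (hu0 : 0 < u) (huQ : u ≤ ∫ x in α..β, p x) :
    qq p α β u ≤ t ↔ u ≤ FF p α β t := by
  constructor
  · intro h
    calc u = FF p α β (qq p α β u) := (FF_qq hint hpos hαβ hu0 huQ).symm
    _ ≤ FF p α β t := FF_mono hint hpos hαβ h
  · intro h
    by_cases hβ : β ≤ t
    · exact (qq_mem_Icc hint hpos hαβ u).2.trans hβ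
    · push_neg at hβ
      have hαt : α ≤ t := by
        by_contra hc
        push_neg at hc
        rw [FF_of_le hint hpos hαβ hc.le] at h
        exact absurd (hu0.trans_le h) (lt_irrefl 0)
      apply csInf_le ⟨α, fun s hs => by
        rcases hs with h' | h'
        · rw [h']; exact hαβ
        · exact h'.1.1⟩
      exact Set.mem_insert_iff.2 (Or.inr ⟨⟨hαt, hβ.le⟩, h⟩)

lemma FF_setIntegral (t : ℝ) : FF p α β t = ∫ x in Set.Ioc α (min t β), p x := by
  by_cases h : α ≤ min t β
  · rw [FF]
    rw [max_eq_right h, intervalIntegral.integral_of_le h]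
  · push_neg at h
    rw [FF]
    rw [max_eq_left (le_of_lt h), intervalIntegral.integral_same,
      Set.Ioc_eq_empty (not_lt.2 h.le), MeasureTheory.setIntegral_empty]

lemma map_qq (hmeas : Measurable p) :
    (volume.restrict (Set.Ioc α β)).withDensity (fun x => ENNReal.ofReal (p x))
      = Measure.map (qq p α β) (volume.restrict (Set.Ioc 0 (∫ x in α..β, p x))) := by
  set Q' := ∫ x in α..β, p x with hQ'
  set μ := (volume.restrict (Set.Ioc α β)).withDensity (fun x => ENNReal.ofReal (p x)) with hμ
  have hpm : Measurable (fun x => ENNReal.ofReal (p x)) := ENNReal.measurable_ofReal.comp hmeas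
  haveI : IsFiniteMeasure μ := by
    constructor
    rw [hμ, withDensity_apply _ MeasurableSet.univ, Measure.restrict_univ]
    calc ∫⁻ x in Set.Ioc α β, ENNReal.ofReal (p x) ∂volume
        ≤ ∫⁻ x, ENNReal.ofReal (p x) ∂volume := setLIntegral_le_lintegral _ _
      _ < ⊤ := hint.lintegral_lt_top
  apply Measure.ext_of_Iic
  intro t
  have hlhs : μ (Set.Iic t) = ENNReal.ofReal (FF p α β t) := by
    rw [hμ, withDensity_apply _ measurableSet_Iic, Measure.restrict_restrict measurableSet_Iic]
    have hset : Set.Iic t ∩ Set.Ioc α β = Set.Ioc α (min t β) := by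
      rw [Set.inter_comm, Set.Ioc_inter_Iic, min_comm]
    rw [hset, ← ofReal_integral_eq_lintegral_ofReal
      (hint.integrableOn) (Filter.Eventually.of_forall hpos), FF_setIntegral hint hpos hαβ]
  rw [hlhs, Measure.map_apply ((qq_mono hint hpos hαβ).measurable) measurableSet_Iic,
    Measure.restrict_apply ((qq_mono hint hpos hαβ).measurable measurableSet_Iic)]
  have hset2 : qq p α β ⁻¹' Set.Iic t ∩ Set.Ioc 0 Q' = Set.Ioc 0 (FF p α β t) := by
    ext u
    simp only [Set.mem_inter_iff, Set.mem_preimage, Set.mem_Iic, Set.mem_Ioc]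
    constructor
    · rintro ⟨h1, h2, h3⟩
      exact ⟨h2, (qq_le_iff hint hpos hαβ h2 h3).1 h1⟩
    · rintro ⟨h1, h2⟩
      have h3 : u ≤ Q' := h2.trans (FF_le hint hpos hαβ t)
      exact ⟨(qq_le_iff hint hpos hαβ h1 h3).2 h2, h1, h3⟩
  rw [hset2, Real.volume_Ioc, sub_zero]

lemma moment (hmeas : Measurable p) (φ : ℝ → ℝ) (hφ : Measurable φ) :
    ∫ x in Set.Ioc α β, φ x * p x = ∫ u in Set.Ioc 0 (∫ x in α..β, p x), φ (qq p α β u) := by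
  have h1 : ∫ x in Set.Ioc α β, φ x * p x
      = ∫ x, φ x ∂((volume.restrict (Set.Ioc α β)).withDensity
          (fun x => ENNReal.ofReal (p x))) := by
    have : (fun x => ENNReal.ofReal (p x)) = (fun x => ((p x).toNNReal : ℝ≥0∞)) := rfl
    rw [this, integral_withDensity_eq_integral_smul
      (f := fun x => (p x).toNNReal) (by exact measurable_real_toNNReal.comp hmeas) φ]
    congr 1
    ext x
    rw [NNReal.smul_def, Real.coe_toNNReal _ (hpos x), smul_eq_mul, mul_comm]
  rw [h1, map_qq hint hpos hαβ hmeas,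
    integral_map ((qq_mono hint hpos hαβ).measurable).aemeasurable
      hφ.aestronglyMeasurable]
end aux

lemma ii_mono {p : ℝ → ℝ} (hint : Integrable p) (hpos : ∀ x, 0 ≤ p x)
    {s m t : ℝ} (h1 : s ≤ m) (h2 : m ≤ t) :
    ∫ x in s..m, p x ≤ ∫ x in s..t, p x := by
  rw [intervalIntegral.integral_of_le h1, intervalIntegral.integral_of_le (h1.trans h2)]
  apply setIntegral_mono_set hint.integrableOn
  · exact Filter.Eventually.of_forall fun x => hpos x
  · exact HasSubset.Subset.eventuallyLE (Set.Ioc_subset_Ioc le_rfl h2)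

lemma zero_tail {p : ℝ → ℝ} (hint : Integrable p) (hpos : ∀ x, 0 ≤ p x)
    (hmono : ∀ x y : ℝ, 0 ≤ x → x ≤ y → p y ≤ p x)
    {s t : ℝ} (h0s : 0 ≤ s) (hst : s < t) (hzero : ∫ x in s..t, p x = 0) :
    ∀ r, s ≤ r → ∫ x in s..r, p x = 0 := by
  obtain ⟨x₀, hx₀, hpx₀⟩ : ∃ x₀ ∈ Set.Ioo s t, p x₀ = 0 := by
    by_contra hc
    push_neg at hc
    have : 0 < ∫ x in s..t, p x :=
      intervalIntegral.intervalIntegral_pos_of_pos_on hint.intervalIntegrable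
        (fun x hx => lt_of_le_of_ne (hpos x) (Ne.symm (hc x hx))) hst
    exact absurd hzero this.ne'
  have hzero' : ∀ y, x₀ ≤ y → p y = 0 := fun y hy =>
    le_antisymm (hpx₀ ▸ hmono x₀ y (h0s.trans hx₀.1.le) hy) (hpos y)
  intro r hsr
  have hsm : s ≤ min r x₀ := le_min hsr (hx₀.1.le)
  have hsplit : ∫ x in s..r, p x = (∫ x in s..(min r x₀), p x) + ∫ x in (min r x₀)..r, p x :=
    (intervalIntegral.integral_add_adjacent_intervals hint.intervalIntegrable
      hint.intervalIntegrable).symm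
  have h1 : ∫ x in s..(min r x₀), p x = 0 := by
    have hle : ∫ x in s..(min r x₀), p x ≤ ∫ x in s..t, p x :=
      ii_mono hint hpos hsm ((min_le_right _ _).trans hx₀.2.le)
    have hge : 0 ≤ ∫ x in s..(min r x₀), p x :=
      intervalIntegral.integral_nonneg hsm (fun x _ => hpos x)
    linarith [hzero ▸ hle]
  have h2 : ∫ x in (min r x₀)..r, p x = 0 := by
    rcases le_total r x₀ with h | h
    · rw [min_eq_left h, intervalIntegral.integral_same]
    · rw [min_eq_right h]
      have heqon : Set.EqOn p (fun _ => (0:ℝ)) (Set.uIcc x₀ r) := by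
        intro y hy
        rw [Set.uIcc_of_le h] at hy
        exact hzero' y hy.1
      rw [intervalIntegral.integral_congr heqon, intervalIntegral.integral_const, smul_zero]
  rw [hsplit, h1, h2, add_zero]

lemma expand {p : ℝ → ℝ} (hint : Integrable p) (hpos : ∀ x, 0 ≤ p x)
    (hmono : ∀ x y : ℝ, 0 ≤ x → x ≤ y → p y ≤ p x)
    {a b c d : ℝ} (ha : 0 ≤ a) (hac : a ≤ c) (hab : a < b) (hcd : c < d)
    (heq : ∫ x in a..b, p x = ∫ x in c..d, p x)
    {u v : ℝ} (hu : 0 < u) (huv : u ≤ v) (hvQ : v < ∫ x in a..b, p x) :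
    qq p a b v - qq p a b u ≤ qq p c d v - qq p c d u := by
  set Q := ∫ x in a..b, p x with hQdef
  have hc0 : 0 ≤ c := ha.trans hac
  have hv : 0 < v := hu.trans_le huv
  have huQ : u ≤ Q := huv.trans hvQ.le
  have hvQ' : v ≤ Q := hvQ.le
  have huQ2 : u ≤ ∫ x in c..d, p x := heq ▸ huQ
  have hvQ2 : v ≤ ∫ x in c..d, p x := heq ▸ hvQ'
  set fu := qq p a b u with hfu_def
  set fv := qq p a b v with hfv_def
  set gu := qq p c d u with hgu_def
  set gv := qq p c d v with hgv_def
  have hfu_mem := qq_mem_Icc hint hpos hab.le u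
  have hfv_mem := qq_mem_Icc hint hpos hab.le v
  have hgu_mem := qq_mem_Icc hint hpos hcd.le u
  have hgv_mem := qq_mem_Icc hint hpos hcd.le v
  have hFfu : FF p a b fu = u := FF_qq hint hpos hab.le hu huQ
  have hFfv : FF p a b fv = v := FF_qq hint hpos hab.le hv hvQ'
  have hGgu : FF p c d gu = u := FF_qq hint hpos hcd.le hu huQ2
  have hGgv : FF p c d gv = v := FF_qq hint hpos hcd.le hv hvQ2
  have hfuv : fu ≤ fv := qq_mono hint hpos hab.le huv
  have hguv : gu ≤ gv := qq_mono hint hpos hcd.le huv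
  have hGd : FF p c d d = Q := by rw [FF_of_ge hint hpos hcd.le le_rfl, ← heq]
  -- step 1 : fu ≤ gu
  have hfg : fu ≤ gu := by
    by_contra hcon
    push_neg at hcon  -- gu < fu
    have hfud : fu ≤ d := by
      by_contra hfd
      push_neg at hfd
      have hge : (∫ x in c..d, p x) ≤ FF p a b fu := by
        rw [FF_setIntegral hint hpos hab.le, intervalIntegral.integral_of_le hcd.le]
        apply setIntegral_mono_set hint.integrableOn
          (Filter.Eventually.of_forall fun x => hpos x)
        apply HasSubset.Subset.eventuallyLE
        exact Set.Ioc_subset_Ioc hac (le_min hfd.le (hfd.le.trans hfu_mem.2))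
      rw [hFfu, ← heq] at hge
      linarith
    -- G fu ≤ F fu
    have hGF : FF p c d fu ≤ FF p a b fu := by
      rw [FF_setIntegral hint hpos hcd.le, FF_setIntegral hint hpos hab.le]
      apply setIntegral_mono_set hint.integrableOn
        (Filter.Eventually.of_forall fun x => hpos x)
      apply HasSubset.Subset.eventuallyLE
      apply Set.Ioc_subset_Ioc hac
      exact le_min (min_le_left _ _) ((min_le_left _ _).trans hfu_mem.2)
    have hGfu : FF p c d fu = u := le_antisymm (hGF.trans_eq hFfu)
      (hGgu ▸ FF_mono hint hpos hcd.le hcon.le)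
    have hz : ∫ x in gu..fu, p x = 0 := by
      have := FF_diff hint hpos hcd.le hgu_mem.1 hcon.le hfud
      rw [hGfu, hGgu, sub_self] at this
      exact this.symm
    have htail := zero_tail hint hpos hmono (hc0.trans hgu_mem.1) hcon hz
    have hQu : Q = u := by
      have hsplit : FF p c d d - FF p c d gu = ∫ x in gu..d, p x :=
        FF_diff hint hpos hcd.le hgu_mem.1 hgu_mem.2 le_rfl
      rw [hGd, hGgu, htail d hgu_mem.2] at hsplit
      linarith
    exact absurd hQu (by linarith)
  -- step 2 : expansion
  by_contra hcon
  push_neg at hcon  -- gv - gu < fv - fu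
  set s := gu - fu with hs_def
  have hs : 0 ≤ s := by simp [hs_def]; linarith
  have hgvlt : gv < fv + s := by linarith
  have h1 : v - u = ∫ x in fu..fv, p x := by
    rw [← FF_diff hint hpos hab.le hfu_mem.1 hfuv hfv_mem.2, hFfu, hFfv]
  have h2 : v - u = ∫ x in gu..gv, p x := by
    rw [← FF_diff hint hpos hcd.le hgu_mem.1 hguv hgv_mem.2, hGgu, hGgv]
  have h3 : ∫ x in fu..fv, p (x + s) ≤ ∫ x in fu..fv, p x := by
    apply intervalIntegral.integral_mono_on hfuv
      (hint.comp_add_right s).intervalIntegrable hint.intervalIntegrable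
    intro x hx
    exact hmono x (x + s) (ha.trans (hfu_mem.1.trans hx.1)) (by linarith)
  have h4 : ∫ x in fu..fv, p (x + s) = ∫ x in gu..(fv + s), p x := by
    rw [intervalIntegral.integral_comp_add_right]
    congr 1
    simp [hs_def]
  have h5 : ∫ x in gu..gv, p x ≤ ∫ x in gu..(fv + s), p x :=
    ii_mono hint hpos hguv hgvlt.le
  have hall : ∫ x in gu..(fv + s), p x = v - u := by
    rw [h4] at h3
    linarith [h5]
  have hz : ∫ x in gv..(fv + s), p x = 0 := by
    have hsplit : (∫ x in gu..gv, p x) + ∫ x in gv..(fv + s), p x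
        = ∫ x in gu..(fv + s), p x :=
      intervalIntegral.integral_add_adjacent_intervals hint.intervalIntegrable
        hint.intervalIntegrable
    rw [hall, ← h2] at hsplit
    linarith
  have htail := zero_tail hint hpos hmono (hc0.trans hgv_mem.1) hgvlt hz
  have hQv : Q = v := by
    have hsplit : FF p c d d - FF p c d gv = ∫ x in gv..d, p x :=
      FF_diff hint hpos hcd.le hgv_mem.1 hgv_mem.2 le_rfl
    rw [hGd, hGgv, htail d hgv_mem.2] at hsplit
    linarith
  exact absurd hQv (by linarith)

lemma double_ident {m : Measure ℝ} [IsFiniteMeasure m] (φ : ℝ → ℝ)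
    (hφ : Integrable φ m) (hφ2 : Integrable (fun u => (φ u)^2) m) :
    ((fun u => ∫ v, (φ u - φ v)^2 ∂m)
      = (fun u => ((m Set.univ).toReal*(φ u)^2 + ∫ v, (φ v)^2 ∂m)
          - (2*∫ v, φ v ∂m)*(φ u)))
    ∧ ∫ u, (∫ v, (φ u - φ v)^2 ∂m) ∂m
      = 2*(m Set.univ).toReal*(∫ u, (φ u)^2 ∂m) - 2*(∫ u, φ u ∂m)^2 := by
  set T := (m Set.univ).toReal with hT
  set I1 := ∫ v, φ v ∂m with hI1
  set I2 := ∫ v, (φ v)^2 ∂m with hI2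
  have hinner : (fun u => ∫ v, (φ u - φ v)^2 ∂m)
      = (fun u => (T*(φ u)^2 + I2) - (2*I1)*(φ u)) := by
    funext u
    have hre : (fun v => (φ u - φ v)^2)
        = fun v => (((φ u)^2 + (φ v)^2) - (φ u * 2)*(φ v)) := by
      funext v; ring
    have hA : Integrable (fun v => (φ u)^2 + (φ v)^2) m := (integrable_const _).add hφ2
    have hB : Integrable (fun v => (φ u * 2) * (φ v)) m := hφ.const_mul _
    rw [hre, integral_sub hA hB, integral_add (integrable_const _) hφ2,
      MeasureTheory.integral_const, MeasureTheory.integral_const_mul]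
    simp only [smul_eq_mul, measureReal_def, ← hI1, ← hI2, ← hT]
    ring
  refine ⟨hinner, ?_⟩
  rw [hinner]
  have hA : Integrable (fun u => T * (φ u)^2 + I2) m := (hφ2.const_mul T).add (integrable_const I2)
  have hB : Integrable (fun u => (2 * I1) * (φ u)) m := hφ.const_mul _
  rw [integral_sub hA hB, integral_add (hφ2.const_mul T) (integrable_const I2), MeasureTheory.integral_const,
    MeasureTheory.integral_const_mul, MeasureTheory.integral_const_mul]
  simp only [smul_eq_mul, measureReal_def, ← hI1, ← hI2, ← hT]
  ring

theorem stmt_7 (p : ℝ → ℝ) (hmeas : Measurable p) (hpos : ∀ x, 0 ≤ p x)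
    (hsymm : ∀ x, p (-x) = p x)
    (hunimodal : ∀ a b : ℝ, |a| ≤ |b| → p b ≤ p a)
    (hdens : ∫ x, p x = 1)
    (a b c d : ℝ) (ha : 0 ≤ a) (hac : a ≤ c) (hab : a < b) (hcd : c < d)
    (heq : ∫ x in a..b, p x = ∫ x in c..d, p x)
    (hQ : 0 < ∫ x in a..b, p x) :
    (∫ x in a..b, x^2 * p x) / (∫ x in a..b, p x)
        - ((∫ x in a..b, x * p x) / (∫ x in a..b, p x))^2
      ≤ (∫ x in c..d, x^2 * p x) / (∫ x in a..b, p x)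
        - ((∫ x in c..d, x * p x) / (∫ x in a..b, p x))^2 := by
  have hint : Integrable p := by
    by_contra hc
    rw [integral_undef hc] at hdens
    norm_num at hdens
  have hmono : ∀ x y : ℝ, 0 ≤ x → x ≤ y → p y ≤ p x := fun x y hx hxy =>
    hunimodal x y (by rw [abs_of_nonneg hx, abs_of_nonneg (hx.trans hxy)]; exact hxy)
  set Q := ∫ x in a..b, p x with hQdef
  set f := qq p a b with hf_def
  set g := qq p c d with hg_def
  set m := volume.restrict (Set.Ioc 0 Q) with hm_def
  have hc0 : 0 ≤ c := ha.trans hac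
  -- moments
  have hA1 : ∫ x in a..b, x * p x = ∫ u, f u ∂m := by
    rw [intervalIntegral.integral_of_le hab.le]
    exact moment hint hpos hab.le hmeas (fun x => x) measurable_id
  have hA2 : ∫ x in a..b, x^2 * p x = ∫ u, (f u)^2 ∂m := by
    rw [intervalIntegral.integral_of_le hab.le]
    simpa using moment hint hpos hab.le hmeas (fun x => x^2) (measurable_id.pow_const 2)
  have hB1 : ∫ x in c..d, x * p x = ∫ u, g u ∂m := by
    rw [intervalIntegral.integral_of_le hcd.le]
    have := moment hint hpos hcd.le hmeas (fun x => x) measurable_id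
    rw [← heq] at this
    simpa using this
  have hB2 : ∫ x in c..d, x^2 * p x = ∫ u, (g u)^2 ∂m := by
    rw [intervalIntegral.integral_of_le hcd.le]
    have := moment hint hpos hcd.le hmeas (fun x => x^2) (measurable_id.pow_const 2)
    rw [← heq] at this
    simpa using this
  -- finiteness and integrability
  haveI hmfin : IsFiniteMeasure m := by
    constructor
    rw [hm_def, Measure.restrict_apply_univ, Real.volume_Ioc]
    exact ENNReal.ofReal_lt_top
  have hmuniv : (m Set.univ).toReal = Q := by
    rw [hm_def, Measure.restrict_apply_univ, Real.volume_Ioc, sub_zero,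
      ENNReal.toReal_ofReal hQ.le]
  set K := max (max |a| |b|) (max |c| |d|) with hK_def
  have hfb : ∀ u, |f u| ≤ K := fun u => by
    have h := qq_mem_Icc hint hpos hab.le u
    exact le_trans (abs_le_max_abs_abs h.1 h.2) (le_max_left _ _)
  have hgb : ∀ u, |g u| ≤ K := fun u => by
    have h := qq_mem_Icc hint hpos hcd.le u
    exact le_trans (abs_le_max_abs_abs h.1 h.2) (le_max_right _ _)
  have hfmeas : Measurable f := (qq_mono hint hpos hab.le).measurable
  have hgmeas : Measurable g := (qq_mono hint hpos hcd.le).measurable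
  have hbint : ∀ (ψ : ℝ → ℝ) (C : ℝ), Measurable ψ → (∀ v, |ψ v| ≤ C) →
      Integrable ψ m := fun ψ C hψ hC =>
    (integrable_const C).mono' hψ.aestronglyMeasurable (Filter.Eventually.of_forall hC)
  have hfint : Integrable f m := hbint f K hfmeas hfb
  have hgint : Integrable g m := hbint g K hgmeas hgb
  have habs_sq : ∀ (ψ : ℝ → ℝ) (C : ℝ), (∀ v, |ψ v| ≤ C) → ∀ v, |(ψ v)^2| ≤ C^2 :=
    fun ψ C hC v => by
      rw [abs_pow]
      exact pow_le_pow_left₀ (abs_nonneg _) (hC v) 2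
  have hf2int : Integrable (fun u => (f u)^2) m :=
    hbint _ (K^2) (hfmeas.pow_const 2) (habs_sq f K hfb)
  have hg2int : Integrable (fun u => (g u)^2) m :=
    hbint _ (K^2) (hgmeas.pow_const 2) (habs_sq g K hgb)
  -- double integral identities
  obtain ⟨hfinner, hfid⟩ := double_ident f hfint hf2int
  obtain ⟨hginner, hgid⟩ := double_ident g hgint hg2int
  -- ae membership
  have haem : ∀ᵐ u ∂m, u ∈ Set.Ioo 0 Q := by
    have hres : volume.restrict (Set.Ioc 0 Q) = volume.restrict (Set.Ioo 0 Q) :=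
      (Measure.restrict_congr_set Ioo_ae_eq_Ioc).symm
    rw [hm_def, hres]
    exact ae_restrict_mem measurableSet_Ioo
  -- pointwise comparison
  have hsqswap : ∀ x y : ℝ, (x - y)^2 = (y - x)^2 := fun x y => by ring
  have hpt : ∀ u ∈ Set.Ioo 0 Q, ∀ v ∈ Set.Ioo 0 Q,
      (f u - f v)^2 ≤ (g u - g v)^2 := by
    intro u hu v hv
    rcases le_total u v with huv | hvu
    · have hexp := expand hint hpos hmono ha hac hab hcd heq hu.1 huv hv.2
      have hf' : 0 ≤ f v - f u := sub_nonneg.2 (qq_mono hint hpos hab.le huv)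
      rw [hsqswap (f u) (f v), hsqswap (g u) (g v)]
      exact pow_le_pow_left₀ hf' (by linarith) 2
    · have hexp := expand hint hpos hmono ha hac hab hcd heq hv.1 hvu hu.2
      have hf' : 0 ≤ f u - f v := sub_nonneg.2 (qq_mono hint hpos hab.le hvu)
      exact pow_le_pow_left₀ hf' (by linarith) 2
  -- compare double integrals
  have hdbl : ∫ u, (∫ v, (f u - f v)^2 ∂m) ∂m ≤ ∫ u, (∫ v, (g u - g v)^2 ∂m) ∂m := by
    apply MeasureTheory.integral_mono_ae
    · rw [hfinner]
      exact ((hf2int.const_mul _).add (integrable_const _)).sub (hfint.const_mul _)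
    · rw [hginner]
      exact ((hg2int.const_mul _).add (integrable_const _)).sub (hgint.const_mul _)
    · filter_upwards [haem] with u hu
      apply MeasureTheory.integral_mono_ae
      · exact hbint _ ((2*K)^2) ((measurable_const.sub hfmeas).pow_const 2)
          (fun v => by
            rw [abs_pow]
            apply pow_le_pow_left₀ (abs_nonneg _)
            calc |f u - f v| ≤ |f u| + |f v| := abs_sub _ _
              _ ≤ 2*K := by linarith [hfb u, hfb v])
      · exact hbint _ ((2*K)^2) ((measurable_const.sub hgmeas).pow_const 2)
          (fun v => by
            rw [abs_pow]
            apply pow_le_pow_left₀ (abs_nonneg _)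
            calc |g u - g v| ≤ |g u| + |g v| := abs_sub _ _
              _ ≤ 2*K := by linarith [hgb u, hgb v])
      · filter_upwards [haem] with v hv
        exact hpt u hu v hv
  rw [hfid, hgid, hmuniv] at hdbl
  -- final algebra
  have halg : ∀ X Y : ℝ, X/Q - (Y/Q)^2 = (2*Q*X - 2*Y^2)/(2*Q^2) := by
    intro X Y
    field_simp
  rw [hA1, hA2, hB1, hB2, halg, halg]
  exact div_le_div_of_nonneg_right hdbl (by positivity)
end

section
/- Let p : ℝ → [0, ∞) be a continuous probability density and fix β₂ ∈ ℝ. For β < β₂ define q(β) = ∫_β^{β₂} p(x) dx and m(β) = ∫_β^{β₂} x·p(x) dx. Then at every β < β₂ with q(β) > 0, the function β ↦ ∫_β^{β₂} x² p(x) dx − m(β)²/q(β) is differentiable with derivative d/dβ [∫_β^{β₂} x² p(x) dx − m(β)²/q(β)] = −p(β)·(β − m(β)/q(β))². -/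
open MeasureTheory intervalIntegral

theorem stmt_8 (p : ℝ → ℝ) (hp : Continuous p) (hpos : ∀ x, 0 ≤ p x)
    (hdens : ∫ x, p x = 1)
    (β₂ β : ℝ) (hβ : β < β₂) (hq : 0 < ∫ x in β..β₂, p x) :
    HasDerivAt
      (fun t : ℝ => (∫ x in t..β₂, x^2 * p x)
        - (∫ x in t..β₂, x * p x)^2 / (∫ x in t..β₂, p x))
      (-(p β) * (β - (∫ x in β..β₂, x * p x) / (∫ x in β..β₂, p x))^2) β := by
  have hq0 : (∫ x in β..β₂, p x) ≠ 0 := ne_of_gt hq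
  have hcq : Continuous fun x => x * p x := continuous_id.mul hp
  have hcs : Continuous fun x : ℝ => x ^ 2 * p x := (continuous_pow 2).mul hp
  have hqd : HasDerivAt (fun t : ℝ => ∫ x in t..β₂, p x) (-(p β)) β :=
    integral_hasDerivAt_left (hp.intervalIntegrable _ _)
      (hp.stronglyMeasurableAtFilter _ _) hp.continuousAt
  have hmd : HasDerivAt (fun t : ℝ => ∫ x in t..β₂, x * p x) (-(β * p β)) β :=
    integral_hasDerivAt_left (hcq.intervalIntegrable _ _)
      (hcq.stronglyMeasurableAtFilter _ _) hcq.continuousAt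
  have hsd : HasDerivAt (fun t : ℝ => ∫ x in t..β₂, x ^ 2 * p x) (-(β ^ 2 * p β)) β :=
    integral_hasDerivAt_left (hcs.intervalIntegrable _ _)
      (hcs.stronglyMeasurableAtFilter _ _) hcs.continuousAt
  have h2 := (hmd.pow 2).div hqd hq0
  have h := hsd.sub h2
  convert h using 1
  · rfl
  · rfl
  · rfl
  set m := ∫ x in β..β₂, x * p x
  set q := ∫ x in β..β₂, p x
  simp only [Pi.pow_apply]
  field_simp
  ring
end

section
/- Let p : ℝ → [0, ∞) be a continuous probability density symmetric around zero, let γ > 0 and c₁, c₂ ≥ 0, and for 0 < β₁ < β₂ with Q(β₁, β₂) := ∫_{β₁}^{β₂} p(x) dx > 0 define μ(β₁, β₂) = (∫_{β₁}^{β₂} x p(x) dx)/Q(β₁, β₂) and the expected total cost J(β₁, β₂) = 2∫₀^{β₁} x² p(x) dx + 2c₁·Q(β₁, β₂) + (2/(γ+1))·(∫_{β₁}^{β₂} x² p(x) dx − (∫_{β₁}^{β₂} x p(x) dx)²/Q(β₁, β₂)) + 2c₂·∫_{β₂}^{∞} p(x) dx. Then J is differentiable in β₁ and β₂ with ∂J/∂β₁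 = 2p(β₁)·(β₁² − c₁ − (1/(γ+1))·(β₁ − μ(β₁, β₂))²) and ∂J/∂β₂ = 2p(β₂)·(c₁ − c₂ + (1/(γ+1))·(β₂ − μ(β₁, β₂))²). In particular, any interior stationary point (β₁, β₂) with p(β₁) > 0 and p(β₂) > 0 satisfies β₁² − (1/(γ+1))·(β₁ − μ)² = c₁ and (1/(γ+1))·(β₂ − μ)² = c₂ − c₁, where μ = μ(β₁, β₂). -/
open MeasureTheory intervalIntegral

/-- Probability that the source lies in `(β₁, β₂)` (one-sided): `∫_{β₁}^{β₂} p`. -/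
noncomputable def thresholdProb (p : ℝ → ℝ) (β₁ β₂ : ℝ) : ℝ := ∫ x in β₁..β₂, p x

/-- Conditional mean `μ(β₁,β₂) = (∫_{β₁}^{β₂} x p)/ (∫_{β₁}^{β₂} p)`. -/
noncomputable def condMean (p : ℝ → ℝ) (β₁ β₂ : ℝ) : ℝ :=
  (∫ x in β₁..β₂, x * p x) / thresholdProb p β₁ β₂

/-- Expected total cost of the threshold-in-threshold policy with thresholds `β₁ ≤ β₂`. -/
noncomputable def totalCost (p : ℝ → ℝ) (γ c₁ c₂ β₁ β₂ : ℝ) : ℝ :=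
  2 * (∫ x in (0:ℝ)..β₁, x^2 * p x)
  + 2 * c₁ * thresholdProb p β₁ β₂
  + (2/(γ+1)) * ((∫ x in β₁..β₂, x^2 * p x)
      - (∫ x in β₁..β₂, x * p x)^2 / thresholdProb p β₁ β₂)
  + 2 * c₂ * ∫ x in Set.Ioi β₂, p x

lemma ioi_split (f : ℝ → ℝ) (hf : Integrable f) (a b : ℝ) (hab : a ≤ b) :
    ∫ x in Set.Ioi a, f x = (∫ x in a..b, f x) + ∫ x in Set.Ioi b, f x := by
  rw [intervalIntegral.integral_of_le hab,
    ← MeasureTheory.setIntegral_union (Set.Ioc_disjoint_Ioi le_rfl) measurableSet_Ioi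
      hf.integrableOn hf.integrableOn, Set.Ioc_union_Ioi_eq_Ioi hab]

lemma ioi_eq (f : ℝ → ℝ) (hf : Integrable f) (b t : ℝ) :
    ∫ x in Set.Ioi t, f x = (∫ x in Set.Ioi b, f x) - ∫ x in b..t, f x := by
  rcases le_total t b with h | h
  · rw [ioi_split f hf t b h, intervalIntegral.integral_symm]; ring
  · rw [ioi_split f hf b t h]; ring

theorem stmt_9 (p : ℝ → ℝ) (hp : Continuous p) (hpos : ∀ x, 0 ≤ p x)
    (hsymm : ∀ x, p (-x) = p x) (hint : Integrable p) (hdens : ∫ x, p x = 1)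
    (γ c₁ c₂ : ℝ) (hγ : 0 < γ) (hc₁ : 0 ≤ c₁) (hc₂ : 0 ≤ c₂)
    (β₁ β₂ : ℝ) (h1 : 0 < β₁) (h2 : β₁ < β₂) (hQ : 0 < thresholdProb p β₁ β₂) :
    HasDerivAt (fun t : ℝ => totalCost p γ c₁ c₂ t β₂)
      (2 * p β₁ * (β₁^2 - c₁ - (1/(γ+1)) * (β₁ - condMean p β₁ β₂)^2)) β₁ ∧
    HasDerivAt (fun t : ℝ => totalCost p γ c₁ c₂ β₁ t)
      (2 * p β₂ * (c₁ - c₂ + (1/(γ+1)) * (β₂ - condMean p β₁ β₂)^2)) β₂ ∧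
    (HasDerivAt (fun t : ℝ => totalCost p γ c₁ c₂ t β₂) 0 β₁ →
     HasDerivAt (fun t : ℝ => totalCost p γ c₁ c₂ β₁ t) 0 β₂ →
     0 < p β₁ → 0 < p β₂ →
      (β₁^2 - (1/(γ+1)) * (β₁ - condMean p β₁ β₂)^2 = c₁ ∧
       (1/(γ+1)) * (β₂ - condMean p β₁ β₂)^2 = c₂ - c₁)) := by
  have hγ1 : γ + 1 ≠ 0 := by linarith
  have hQne : thresholdProb p β₁ β₂ ≠ 0 := ne_of_gt hQ
  set Q := thresholdProb p β₁ β₂ with hQdef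
  set M := ∫ x in β₁..β₂, x * p x with hMdef
  have hcp : Continuous (fun x : ℝ => x * p x) := continuous_id.mul hp
  have hcp2 : Continuous (fun x : ℝ => x ^ 2 * p x) := (continuous_pow 2).mul hp
  -- derivative in β₁
  have hA : HasDerivAt (fun t : ℝ => ∫ x in (0:ℝ)..t, x ^ 2 * p x) (β₁ ^ 2 * p β₁) β₁ :=
    intervalIntegral.integral_hasDerivAt_right (hcp2.intervalIntegrable _ _)
      (hcp2.stronglyMeasurable.stronglyMeasurableAtFilter) hcp2.continuousAt
  have hQ1 : HasDerivAt (fun t : ℝ => thresholdProb p t β₂) (-(p β₁)) β₁ :=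
    intervalIntegral.integral_hasDerivAt_left (hp.intervalIntegrable _ _)
      (hp.stronglyMeasurable.stronglyMeasurableAtFilter) hp.continuousAt
  have hM1 : HasDerivAt (fun t : ℝ => ∫ x in t..β₂, x * p x) (-(β₁ * p β₁)) β₁ :=
    intervalIntegral.integral_hasDerivAt_left (hcp.intervalIntegrable _ _)
      (hcp.stronglyMeasurable.stronglyMeasurableAtFilter) hcp.continuousAt
  have hS1 : HasDerivAt (fun t : ℝ => ∫ x in t..β₂, x ^ 2 * p x) (-(β₁ ^ 2 * p β₁)) β₁ :=
    intervalIntegral.integral_hasDerivAt_left (hcp2.intervalIntegrable _ _)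
      (hcp2.stronglyMeasurable.stronglyMeasurableAtFilter) hcp2.continuousAt
  have hR1 : HasDerivAt
      (fun t : ℝ => (∫ x in t..β₂, x * p x) ^ 2 / thresholdProb p t β₂)
      ((2 * M ^ 1 * (-(β₁ * p β₁)) * Q - M ^ 2 * (-(p β₁))) / Q ^ 2) β₁ :=
    (hM1.pow 2).div hQ1 hQne
  have hd1 : HasDerivAt (fun t : ℝ => totalCost p γ c₁ c₂ t β₂)
      (2 * (β₁ ^ 2 * p β₁) + 2 * c₁ * (-(p β₁))
        + (2/(γ+1)) * ((-(β₁ ^ 2 * p β₁))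
            - (2 * M ^ 1 * (-(β₁ * p β₁)) * Q - M ^ 2 * (-(p β₁))) / Q ^ 2)) β₁ := by
    unfold totalCost
    exact (((hA.const_mul 2).add (hQ1.const_mul (2 * c₁))).add
      ((hS1.sub hR1).const_mul (2/(γ+1)))).add_const _
  have he1 : (2 * (β₁ ^ 2 * p β₁) + 2 * c₁ * (-(p β₁))
        + (2/(γ+1)) * ((-(β₁ ^ 2 * p β₁))
            - (2 * M ^ 1 * (-(β₁ * p β₁)) * Q - M ^ 2 * (-(p β₁))) / Q ^ 2))
      = 2 * p β₁ * (β₁^2 - c₁ - (1/(γ+1)) * (β₁ - condMean p β₁ β₂)^2) := by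
    rw [condMean, ← hQdef, ← hMdef]
    field_simp
    ring
  have H1 : HasDerivAt (fun t : ℝ => totalCost p γ c₁ c₂ t β₂)
      (2 * p β₁ * (β₁^2 - c₁ - (1/(γ+1)) * (β₁ - condMean p β₁ β₂)^2)) β₁ := he1 ▸ hd1
  -- derivative in β₂
  have hQ2 : HasDerivAt (fun t : ℝ => thresholdProb p β₁ t) (p β₂) β₂ :=
    intervalIntegral.integral_hasDerivAt_right (hp.intervalIntegrable _ _)
      (hp.stronglyMeasurable.stronglyMeasurableAtFilter) hp.continuousAt
  have hM2 : HasDerivAt (fun t : ℝ => ∫ x in β₁..t, x * p x) (β₂ * p β₂) β₂ :=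
    intervalIntegral.integral_hasDerivAt_right (hcp.intervalIntegrable _ _)
      (hcp.stronglyMeasurable.stronglyMeasurableAtFilter) hcp.continuousAt
  have hS2 : HasDerivAt (fun t : ℝ => ∫ x in β₁..t, x ^ 2 * p x) (β₂ ^ 2 * p β₂) β₂ :=
    intervalIntegral.integral_hasDerivAt_right (hcp2.intervalIntegrable _ _)
      (hcp2.stronglyMeasurable.stronglyMeasurableAtFilter) hcp2.continuousAt
  have hT2 : HasDerivAt (fun t : ℝ => ∫ x in Set.Ioi t, p x) (-(p β₂)) β₂ := by
    have : (fun t : ℝ => ∫ x in Set.Ioi t, p x)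
        = fun t : ℝ => (∫ x in Set.Ioi β₂, p x) - ∫ x in β₂..t, p x := by
      funext t; exact ioi_eq p hint β₂ t
    rw [this]
    have hI : HasDerivAt (fun t : ℝ => ∫ x in β₂..t, p x) (p β₂) β₂ :=
      intervalIntegral.integral_hasDerivAt_right (hp.intervalIntegrable _ _)
        (hp.stronglyMeasurable.stronglyMeasurableAtFilter) hp.continuousAt
    have h := (hasDerivAt_const β₂ (∫ x in Set.Ioi β₂, p x)).sub hI
    rw [zero_sub] at h
    exact h
  have hR2 : HasDerivAt
      (fun t : ℝ => (∫ x in β₁..t, x * p x) ^ 2 / thresholdProb p β₁ t)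
      ((2 * M ^ 1 * (β₂ * p β₂) * Q - M ^ 2 * (p β₂)) / Q ^ 2) β₂ :=
    (hM2.pow 2).div hQ2 hQne
  have hd2 : HasDerivAt (fun t : ℝ => totalCost p γ c₁ c₂ β₁ t)
      (0 + 2 * c₁ * (p β₂)
        + (2/(γ+1)) * ((β₂ ^ 2 * p β₂)
            - (2 * M ^ 1 * (β₂ * p β₂) * Q - M ^ 2 * (p β₂)) / Q ^ 2)
        + 2 * c₂ * (-(p β₂))) β₂ := by
    unfold totalCost
    exact (((hasDerivAt_const β₂ (2 * (∫ x in (0:ℝ)..β₁, x^2 * p x))).add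
      (hQ2.const_mul (2 * c₁))).add ((hS2.sub hR2).const_mul (2/(γ+1)))).add
      (hT2.const_mul (2 * c₂))
  have he2 : (0 + 2 * c₁ * (p β₂)
        + (2/(γ+1)) * ((β₂ ^ 2 * p β₂)
            - (2 * M ^ 1 * (β₂ * p β₂) * Q - M ^ 2 * (p β₂)) / Q ^ 2)
        + 2 * c₂ * (-(p β₂)))
      = 2 * p β₂ * (c₁ - c₂ + (1/(γ+1)) * (β₂ - condMean p β₁ β₂)^2) := by
    rw [condMean, ← hQdef, ← hMdef]
    field_simp
    ring
  have H2 : HasDerivAt (fun t : ℝ => totalCost p γ c₁ c₂ β₁ t)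
      (2 * p β₂ * (c₁ - c₂ + (1/(γ+1)) * (β₂ - condMean p β₁ β₂)^2)) β₂ := he2 ▸ hd2
  refine ⟨H1, H2, fun z1 z2 hp1 hp2 => ?_⟩
  have e1 : 2 * p β₁ * (β₁^2 - c₁ - (1/(γ+1)) * (β₁ - condMean p β₁ β₂)^2) = 0 :=
    H1.unique z1
  have e2 : 2 * p β₂ * (c₁ - c₂ + (1/(γ+1)) * (β₂ - condMean p β₁ β₂)^2) = 0 :=
    H2.unique z2
  have hne1 : (2 : ℝ) * p β₁ ≠ 0 := by positivity
  have hne2 : (2 : ℝ) * p β₂ ≠ 0 := by positivity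
  have f1 := (mul_eq_zero.1 e1).resolve_left hne1
  have f2 := (mul_eq_zero.1 e2).resolve_left hne2
  constructor <;> linarith
end

section
/- Let λ > 0, γ > 0 and 0 ≤ c₁ < c₂. Consider the system of equations in (β₁, β₂) with 0 ≤ β₁ < β₂, where Δβ = β₂ − β₁ and μ = β₁ + 1/λ − Δβ/(e^{λΔβ} − 1): (i) β₁² − (1/(1+γ))·(β₁ − μ)² = c₁ and (ii) (1/(1+γ))·(β₂ − μ)² = c₂ − c₁ with β₂ > μ. This system is equivalent to: Δβ·e^{λΔβ}/(e^{λΔβ} − 1) = 1/λ + √((c₂ − c₁)(1+γ)) and β₁ = √(c₁ + (1/(1+γ))·(Δβ − √((c₂ − c₁)(1+γ)))²), and it admits a unique solution (β₁, β₂) with β₁ ≥ 0 and Δβ > 0. -/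
private lemma g_deriv (x : ℝ) (hx : 0 < x) :
    HasDerivAt (fun u => u * Real.exp u / (Real.exp u - 1))
      ((Real.exp x * (Real.exp x - 1 - x)) / (Real.exp x - 1)^2) x := by
  have hE : 1 < Real.exp x := by
    have := Real.add_one_lt_exp (ne_of_gt hx); linarith
  have hne : Real.exp x - 1 ≠ 0 := by intro h; linarith
  have h1 : HasDerivAt (fun u => u * Real.exp u)
      (1 * Real.exp x + x * Real.exp x) x :=
    (hasDerivAt_id x).mul (Real.hasDerivAt_exp x)
  have h2 : HasDerivAt (fun u => Real.exp u - 1) (Real.exp x) x :=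
    (Real.hasDerivAt_exp x).sub_const 1
  have h3 := h1.div h2 hne
  refine h3.congr_deriv ?_
  ring

private lemma g_mono : StrictMonoOn (fun u => u * Real.exp u / (Real.exp u - 1)) (Set.Ioi 0) := by
  apply strictMonoOn_of_deriv_pos (convex_Ioi 0)
  · apply ContinuousOn.div
    · exact (continuous_id.mul Real.continuous_exp).continuousOn
    · exact (Real.continuous_exp.sub continuous_const).continuousOn
    · intro x hx
      have := Real.add_one_lt_exp (ne_of_gt (Set.mem_Ioi.mp hx))
      intro h; linarith [Set.mem_Ioi.mp hx]
  · intro x hx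
    rw [interior_Ioi] at hx
    have hx' : 0 < x := hx
    rw [(g_deriv x hx').deriv]
    have h := Real.add_one_lt_exp (ne_of_gt hx')
    have he : 0 < Real.exp x := Real.exp_pos x
    have hne : 0 < Real.exp x - 1 := by linarith
    apply div_pos
    · apply mul_pos he; linarith
    · positivity

theorem stmt_12 (lam γ c₁ c₂ : ℝ) (hlam : 0 < lam) (hγ : 0 < γ)
    (hc₁ : 0 ≤ c₁) (hc : c₁ < c₂) :
    (∀ β₁ β₂ : ℝ, 0 ≤ β₁ → β₁ < β₂ →
      (((β₁^2 - (1/(1+γ)) *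
          (β₁ - (β₁ + 1/lam - (β₂ - β₁)/(Real.exp (lam*(β₂ - β₁)) - 1)))^2 = c₁) ∧
        ((1/(1+γ)) *
          (β₂ - (β₁ + 1/lam - (β₂ - β₁)/(Real.exp (lam*(β₂ - β₁)) - 1)))^2 = c₂ - c₁) ∧
        ((β₁ + 1/lam - (β₂ - β₁)/(Real.exp (lam*(β₂ - β₁)) - 1)) < β₂))
       ↔
       (((β₂ - β₁) * Real.exp (lam*(β₂ - β₁)) / (Real.exp (lam*(β₂ - β₁)) - 1)
          = 1/lam + Real.sqrt ((c₂ - c₁)*(1+γ))) ∧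
        (β₁ = Real.sqrt (c₁ + (1/(1+γ)) *
          ((β₂ - β₁) - Real.sqrt ((c₂ - c₁)*(1+γ)))^2))))) ∧
    (∃! q : ℝ × ℝ, 0 ≤ q.1 ∧ q.1 < q.2 ∧
      ((q.2 - q.1) * Real.exp (lam*(q.2 - q.1)) / (Real.exp (lam*(q.2 - q.1)) - 1)
        = 1/lam + Real.sqrt ((c₂ - c₁)*(1+γ))) ∧
      (q.1 = Real.sqrt (c₁ + (1/(1+γ)) *
        ((q.2 - q.1) - Real.sqrt ((c₂ - c₁)*(1+γ)))^2))) := by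
  have hγ1 : (0:ℝ) < 1 + γ := by linarith
  have hcc : 0 < c₂ - c₁ := by linarith
  set s := Real.sqrt ((c₂ - c₁)*(1+γ)) with hsdef
  have hs0 : 0 < s := Real.sqrt_pos.mpr (mul_pos hcc hγ1)
  have hssq : s^2 = (c₂ - c₁)*(1+γ) := Real.sq_sqrt (le_of_lt (mul_pos hcc hγ1))
  constructor
  · intro β₁ β₂ hb1 hlt
    set Δ := β₂ - β₁ with hΔdef
    have hΔ : 0 < Δ := sub_pos.mpr hlt
    set E := Real.exp (lam * Δ) with hEdef
    have hE1 : 1 < E := by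
      have := Real.add_one_lt_exp (ne_of_gt (mul_pos hlam hΔ))
      rw [hEdef]; nlinarith [mul_pos hlam hΔ]
    have hEne : E - 1 ≠ 0 := by intro h; linarith
    set M := β₁ + 1/lam - Δ/(E - 1) with hMdef
    have hβ2 : β₂ = β₁ + Δ := by rw [hΔdef]; ring
    constructor
    · rintro ⟨h1, h2, h3⟩
      have hsq2 : (β₂ - M)^2 = (c₂ - c₁)*(1+γ) := by
        field_simp at h2; linarith
      have hsBM : s = β₂ - M := by
        rw [hsdef, ← hsq2, Real.sqrt_sq (by linarith : (0:ℝ) ≤ β₂ - M)]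
      constructor
      · rw [hsBM, hMdef, hβ2]; field_simp; ring
      · have hds : Δ - s = -(β₁ - M) := by rw [hsBM, hβ2]; ring
        have hx : c₁ + 1/(1+γ)*(Δ - s)^2 = β₁^2 := by
          rw [hds, neg_sq]; linarith
        rw [hx, Real.sqrt_sq hb1]
    · rintro ⟨hA, hB⟩
      have hBM : β₂ - M = s := by
        have key : β₂ - M = Δ * E/(E-1) - 1/lam := by
          rw [hMdef, hβ2]; field_simp; ring
        rw [key, hA]; ring
      have hMlt : M < β₂ := by linarith
      have hXnn : (0:ℝ) ≤ c₁ + 1/(1+γ) * (Δ - s)^2 := by positivity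
      have hb1sq : β₁^2 = c₁ + 1/(1+γ) * (Δ - s)^2 := by
        rw [hB, Real.sq_sqrt hXnn]
      have hds : β₁ - M = -(Δ - s) := by rw [← hBM, hβ2]; ring
      refine ⟨?_, ?_, hMlt⟩
      · rw [hds, neg_sq]; linarith
      · rw [hBM, hssq]; field_simp
  · have hk : 0 < 1/lam + s := by positivity
    have hlk : 0 < lam * (1/lam + s) := mul_pos hlam hk
    set u₀ := Real.log (1 + lam*s) with hu0def
    have h1ls : 1 < 1 + lam*s := by nlinarith
    have hu0 : 0 < u₀ := Real.log_pos h1ls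
    set u₁ := u₀ + lam*(1/lam + s) with hu1def
    have hu01 : u₀ ≤ u₁ := by rw [hu1def]; linarith
    have hcont : ContinuousOn (fun u => u * Real.exp u / (Real.exp u - 1)) (Set.Icc u₀ u₁) := by
      apply ContinuousOn.div
      · exact (continuous_id.mul Real.continuous_exp).continuousOn
      · exact (Real.continuous_exp.sub continuous_const).continuousOn
      · intro x hx
        have hxp : 0 < x := lt_of_lt_of_le hu0 hx.1
        have := Real.add_one_lt_exp (ne_of_gt hxp)
        intro h; linarith
    have hE0 : Real.exp u₀ = 1 + lam*s := Real.exp_log (by linarith)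
    have hg0 : u₀ * Real.exp u₀ / (Real.exp u₀ - 1) ≤ lam*(1/lam + s) := by
      have h01 : u₀ ≤ Real.exp u₀ - 1 := by linarith [Real.add_one_le_exp u₀]
      have hden : 0 < Real.exp u₀ - 1 := by rw [hE0]; nlinarith
      rw [div_le_iff₀ hden]
      have hrhs : lam*(1/lam + s) = 1 + lam*s := by field_simp
      rw [hrhs, ← hE0]
      nlinarith [Real.exp_pos u₀]
    have hg1 : lam*(1/lam + s) ≤ u₁ * Real.exp u₁ / (Real.exp u₁ - 1) := by
      have hu1p : 0 < u₁ := by linarith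
      have := Real.add_one_lt_exp (ne_of_gt hu1p)
      have hden : 0 < Real.exp u₁ - 1 := by linarith
      rw [le_div_iff₀ hden]
      nlinarith [Real.exp_pos u₁]
    obtain ⟨u, huIcc, hgu⟩ := intermediate_value_Icc hu01 hcont ⟨hg0, hg1⟩
    simp only at hgu
    have hupos : 0 < u := lt_of_lt_of_le hu0 huIcc.1
    set Δ := u/lam with hΔdef
    have hΔpos : 0 < Δ := div_pos hupos hlam
    have hlamΔ : lam * Δ = u := by rw [hΔdef]; field_simp
    set β₁ := Real.sqrt (c₁ + 1/(1+γ) * (Δ - s)^2) with hb1def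
    have hmain : Δ * Real.exp (lam*Δ) / (Real.exp (lam*Δ) - 1) = 1/lam + s := by
      rw [hlamΔ]
      have h5 : Δ * Real.exp u / (Real.exp u - 1) = (u * Real.exp u / (Real.exp u - 1))/lam := by
        rw [hΔdef]; ring
      rw [h5, hgu]
      field_simp
    refine ⟨(β₁, β₁ + Δ), ⟨Real.sqrt_nonneg _, by simp only; linarith, ?_, ?_⟩, ?_⟩
    · simp only [add_sub_cancel_left]
      exact hmain
    · simp only [add_sub_cancel_left]
      exact hb1def
    · rintro ⟨a, b⟩ ⟨hq0, hqlt, hq1, hq2⟩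
      simp only at hq0 hq1 hq2 hqlt ⊢
      have hbapos : 0 < b - a := sub_pos.mpr hqlt
      have hg' : (fun u => u * Real.exp u / (Real.exp u - 1)) (lam*(b-a)) = lam*(1/lam + s) := by
        simp only
        rw [← hq1]; ring
      have hg'' : (fun u => u * Real.exp u / (Real.exp u - 1)) u = lam*(1/lam + s) := hgu
      have heq : lam*(b-a) = u :=
        g_mono.injOn (Set.mem_Ioi.mpr (mul_pos hlam hbapos)) (Set.mem_Ioi.mpr hupos)
          (hg'.trans hg''.symm)
      have hba : b - a = Δ := mul_left_cancel₀ (ne_of_gt hlam) (heq.trans hlamΔ.symm)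
      have ha : a = β₁ := by rw [hb1def, ← hba]; exact hq2
      refine Prod.ext ha ?_
      simp only
      linarith
end
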